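/- Fix a $\lambda$-tableau $\t_0$ and a bicomposition $(\alpha|\beta)$ of $n$, and let $\mathscr{C} = \{d \in \mathrm{Sym}_n : d^{-1} C_{\t_0} d \cap \mathrm{Sym}_{\alpha|\beta} \subseteq \mathrm{Sym}_{\beta}^{+|\alpha|}\}$. For $d \in \mathrm{Sym}_n$, the following are equivalent: (a) $d \in \mathscr{C}$; (b) $\mathrm{stab}_{C_{\t_0}}(\mathrm{T}_d) \subseteq d\,\mathrm{Sym}_\beta^{+|\alpha|}\,d^{-1}$; (c) whenever $\mathrm{T}_d(i,j) = \mathrm{T}_d(i',j)$ for nodes $(i,j),(i',j) \in [\lambda]$ with $i \ne i'$, the common value is one of the colours $\mathbf{d}_k$. -/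

import Mathlib

namespace SignedYoung
open Equiv Finset
open scoped Classical

abbrev Sym (n : ℕ) := Equiv.Perm (Fin n)

/-- Index of the block of the composition `γ` containing position `i` (0-based). -/
def blockOf (γ : List ℕ) (i : ℕ) : ℕ :=
  (List.range γ.length).countP (fun j => decide ((γ.take (j + 1)).sum ≤ i))

/-- The Young subgroup of `Sym n` associated to the composition `γ`. -/
def youngSubgroup (n : ℕ) (γ : List ℕ) : Subgroup (Sym n) where
  carrier := {σ | ∀ i : Fin n, blockOf γ (σ i) = blockOf γ i}
  one_mem' := by intro i; simp
  mul_mem' := by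
    intro a b ha hb i
    simp only [Equiv.Perm.mul_apply]
    rw [ha, hb]
  inv_mem' := by
    intro a ha i
    have h := ha (a⁻¹ i)
    have e : a (a⁻¹ i) = i := by simp
    rw [e] at h
    exact h.symm

/-- The subgroup `Sym_α` of the Young subgroup `Sym_{α|β}`: block-preserving permutations
fixing all points `≥ |α|`. -/
def symA (n : ℕ) (α β : List ℕ) : Set (Sym n) :=
  {σ | σ ∈ youngSubgroup n (α ++ β) ∧ ∀ i : Fin n, α.sum ≤ (i : ℕ) → σ i = i}

/-- The subgroup `Sym_β^{+|α|}`: block-preserving permutations fixing all points `< |α|`. -/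
def symB (n : ℕ) (α β : List ℕ) : Set (Sym n) :=
  {σ | σ ∈ youngSubgroup n (α ++ β) ∧ ∀ i : Fin n, (i : ℕ) < α.sum → σ i = i}

/-- Cells of the Young diagram of the composition `lam`. -/
abbrev Cell (lam : List ℕ) := (i : Fin lam.length) × Fin (lam.get i)

/-- A `lam`-tableau: a bijective labelling of the cells by `1, …, n` (here `Fin n`). -/
abbrev Tab (n : ℕ) (lam : List ℕ) := Cell lam ≃ Fin n

/-- The row stabilizer of a tableau. -/
def rowStab {n : ℕ} {lam : List ℕ} (t : Tab n lam) : Set (Sym n) :=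
  {σ | ∀ a : Fin n, (t.symm (σ a)).1 = (t.symm a).1}

/-- The column stabilizer of a tableau. -/
def colStab {n : ℕ} {lam : List ℕ} (t : Tab n lam) : Set (Sym n) :=
  {σ | ∀ a : Fin n, ((t.symm (σ a)).2 : ℕ) = ((t.symm a).2 : ℕ)}

/-- Colours `c_1 < c_2 < ⋯ < d_1 < d_2 < ⋯` (0-based). -/
abbrev Colour := Lex (ℕ ⊕ ℕ)

def cCol (k : ℕ) : Colour := toLex (Sum.inl k)

def dCol (k : ℕ) : Colour := toLex (Sum.inr k)

/-- `T` is a `lam`-tableau of type `(α|β)`: exactly `α_k` cells of colour `c_k` and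
`β_k` of colour `d_k`. -/
def HasType {lam : List ℕ} (α β : List ℕ) (T : Cell lam → Colour) : Prop :=
  (∀ k : ℕ, (Finset.univ.filter fun c => T c = cCol k).card = α.getD k 0) ∧
  (∀ k : ℕ, (Finset.univ.filter fun c => T c = dCol k).card = β.getD k 0)

/-- The colour of the number `i` under the canonical colouring by `(α|β)`. -/
def colourOfIdx (α β : List ℕ) (i : ℕ) : Colour :=
  if blockOf (α ++ β) i < α.length then cCol (blockOf (α ++ β) i)
  else dCol (blockOf (α ++ β) i - α.length)

/-- The canonical `lam`-tableau of type `(α|β)` associated to the tableau `t0`. -/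
def canonT {n : ℕ} {lam : List ℕ} (t0 : Tab n lam) (α β : List ℕ) : Cell lam → Colour :=
  fun c => colourOfIdx α β (t0 c)

/-- The action `σ · T = T ∘ t0⁻¹ ∘ σ⁻¹ ∘ t0` of `Sym n` on tableaux of type `(α|β)`,
through the fixed tableau `t0`. -/
def actT {n : ℕ} {lam : List ℕ} (t0 : Tab n lam) (σ : Sym n) (T : Cell lam → Colour) :
    Cell lam → Colour :=
  fun c => T (t0.symm (σ⁻¹ (t0 c)))

/-- `T_d = d · T_0`. -/
def TOf {n : ℕ} {lam : List ℕ} (t0 : Tab n lam) (α β : List ℕ) (d : Sym n) :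
    Cell lam → Colour :=
  actT t0 d (canonT t0 α β)

def RowSemistd {lam : List ℕ} (T : Cell lam → Colour) : Prop :=
  ∀ c c' : Cell lam, c.1 = c'.1 → (c.2 : ℕ) < (c'.2 : ℕ) → T c ≤ T c'

def ColSemistd {lam : List ℕ} (T : Cell lam → Colour) : Prop :=
  ∀ c c' : Cell lam, (c.2 : ℕ) = (c'.2 : ℕ) → c.1 < c'.1 → T c ≤ T c'

/-- Repeats in a row occur only for colours `c_k`. -/
def RowRepeatC {lam : List ℕ} (T : Cell lam → Colour) : Prop :=
  ∀ c c' : Cell lam, c.1 = c'.1 → (c.2 : ℕ) ≠ (c'.2 : ℕ) → T c = T c' → ∃ k, T c = cCol k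

/-- Repeats in a column occur only for colours `d_k`. -/
def ColRepeatD {lam : List ℕ} (T : Cell lam → Colour) : Prop :=
  ∀ c c' : Cell lam, (c.2 : ℕ) = (c'.2 : ℕ) → c.1 ≠ c'.1 → T c = T c' → ∃ k, T c = dCol k

def IsSemistd {lam : List ℕ} (T : Cell lam → Colour) : Prop :=
  RowSemistd T ∧ ColSemistd T ∧ RowRepeatC T ∧ ColRepeatD T

/-- A standard tableau: strictly increasing along rows and down columns. -/
def IsStd {n : ℕ} {lam : List ℕ} (t : Tab n lam) : Prop :=
  (∀ c c' : Cell lam, c.1 = c'.1 → (c.2 : ℕ) < (c'.2 : ℕ) → t c < t c') ∧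
  (∀ c c' : Cell lam, (c.2 : ℕ) = (c'.2 : ℕ) → c.1 < c'.1 → t c < t c')

def IsPartition (n : ℕ) (lam : List ℕ) : Prop :=
  lam.Pairwise (· ≥ ·) ∧ (∀ x ∈ lam, 0 < x) ∧ lam.sum = n

def IsBicomp (n : ℕ) (α β : List ℕ) : Prop :=
  (∀ x ∈ α, 0 < x) ∧ (∀ x ∈ β, 0 < x) ∧ α.sum + β.sum = n

/-- `𝒮 = {d : d⁻¹ R_{t0} d ∩ Sym_{α|β} ⊆ Sym_α}`. -/
def RSet {n : ℕ} {lam : List ℕ} (t0 : Tab n lam) (α β : List ℕ) : Set (Sym n) :=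
  {d | ∀ σ ∈ rowStab t0, d⁻¹ * σ * d ∈ youngSubgroup n (α ++ β) →
    d⁻¹ * σ * d ∈ symA n α β}

/-- `𝒞 = {d : d⁻¹ C_{t0} d ∩ Sym_{α|β} ⊆ Sym_β^{+|α|}}`. -/
def CSet {n : ℕ} {lam : List ℕ} (t0 : Tab n lam) (α β : List ℕ) : Set (Sym n) :=
  {d | ∀ σ ∈ colStab t0, d⁻¹ * σ * d ∈ youngSubgroup n (α ++ β) →
    d⁻¹ * σ * d ∈ symB n α β}

/-- The double coset `R_{t0} x Sym_{α|β}`. -/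
def dCoset {n : ℕ} {lam : List ℕ} (t0 : Tab n lam) (α β : List ℕ) (x : Sym n) :
    Set (Sym n) :=
  {ω | ∃ τ ∈ rowStab t0, ∃ ξ ∈ youngSubgroup n (α ++ β), ω = τ * x * ξ}

/-- The double coset `C_{t0} x Sym_{α|β}`. -/
def cCoset {n : ℕ} {lam : List ℕ} (t0 : Tab n lam) (α β : List ℕ) (x : Sym n) :
    Set (Sym n) :=
  {ω | ∃ σ ∈ colStab t0, ∃ ξ ∈ youngSubgroup n (α ++ β), ω = σ * x * ξ}

/-- `ε` is the sign function `ε_𝔡` on the double coset `R_{t0} 𝔡 Sym_{α|β}`: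
`ε(τ 𝔡 ξ_α ξ_β^{+|α|}) = sgn ξ_β`. -/
def IsEps {n : ℕ} {lam : List ℕ} (t0 : Tab n lam) (α β : List ℕ) (𝔡 : Sym n)
    (ε : Sym n → ℤ) : Prop :=
  ∀ τ ∈ rowStab t0, ∀ ξa ∈ symA n α β, ∀ ξb ∈ symB n α β,
    ε (τ * 𝔡 * (ξa * ξb)) = (Equiv.Perm.sign ξb : ℤ)

/-- The coefficient `𝔞_{d,𝔡} = ∑_{σ ∈ C_{t0}, σd ∈ R_{t0} 𝔡 Sym_{α|β}} sgn(σ) ε_𝔡(σ d)`. -/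
noncomputable def coeffA {n : ℕ} {lam : List ℕ} (t0 : Tab n lam) (α β : List ℕ)
    (ε : Sym n → ℤ) (d 𝔡 : Sym n) : ℤ :=
  ∑ σ : Sym n, if σ ∈ colStab t0 ∧ σ * d ∈ dCoset t0 α β 𝔡
    then (Equiv.Perm.sign σ : ℤ) * ε (σ * d) else 0

/-- The multiset of colours in column `j` of `T`. -/
def colMul {lam : List ℕ} (T : Cell lam → Colour) (j : ℕ) : Multiset Colour :=
  (Finset.univ.filter fun c : Cell lam => (c.2 : ℕ) = j).val.map T

noncomputable def sortedCol (m : Multiset Colour) : List Colour := m.sort (· ≤ ·)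

/-- Comparison of column multisets: the sorted lists agree up to position `k`, where
the first is larger. -/
def msGT (m m' : Multiset Colour) : Prop :=
  ∃ k, (∀ s, s < k → (sortedCol m).getD s (cCol 0) = (sortedCol m').getD s (cCol 0)) ∧
    (sortedCol m').getD k (cCol 0) < (sortedCol m).getD k (cCol 0)

/-- The strict column-dominance order `T ⊳ T'`. -/
def TabGT {lam : List ℕ} (T T' : Cell lam → Colour) : Prop :=
  ∃ t, (∀ j, j < t → colMul T j = colMul T' j) ∧ msGT (colMul T t) (colMul T' t)

/-- The column-dominance pre-order `T ⊵ T'`. -/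
def TabGE {lam : List ℕ} (T T' : Cell lam → Colour) : Prop :=
  (∀ j, colMul T j = colMul T' j) ∨ TabGT T T'



lemma mem_young_iff {n : ℕ} {γ : List ℕ} {σ : Sym n} :
    σ ∈ youngSubgroup n γ ↔ ∀ i : Fin n, blockOf γ (σ i) = blockOf γ i := Iff.rfl

lemma perm_apply_inv_self {X : Type*} (σ : Equiv.Perm X) (x : X) : σ (σ⁻¹ x) = x :=
  σ.apply_symm_apply x

lemma perm_inv_apply_self {X : Type*} (σ : Equiv.Perm X) (x : X) : σ⁻¹ (σ x) = x :=
  σ.symm_apply_apply x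

lemma sum_take_le (l : List ℕ) (k : ℕ) : (l.take k).sum ≤ l.sum := by
  conv_rhs => rw [← List.take_append_drop k l]
  rw [List.sum_append]
  exact Nat.le_add_right _ _

lemma blockOf_lt_iff (α β : List ℕ) (i : ℕ) :
    blockOf (α ++ β) i < α.length ↔ i < α.sum := by
  unfold blockOf
  rw [List.length_append]
  constructor
  · intro h
    by_contra hge
    push_neg at hge
    have h1 : (List.range α.length).countP
        (fun j => decide (((α ++ β).take (j + 1)).sum ≤ i)) = α.length := by
      have hall : ∀ a ∈ List.range α.length,
          (fun j => decide (((α ++ β).take (j + 1)).sum ≤ i)) a = true := by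
        intro j hj
        rw [List.mem_range] at hj
        simp only [decide_eq_true_eq]
        rw [List.take_append_of_le_length (by omega)]
        exact le_trans (sum_take_le α (j + 1)) hge
      simpa using List.countP_eq_length.mpr hall
    rw [List.range_add, List.countP_append, h1] at h
    omega
  · intro h
    have hne : α ≠ [] := by
      intro e; rw [e] at h; simp at h
    have hpos : 0 < α.length := List.length_pos_iff.mpr hne
    have hkey : ∀ j : ℕ, (((α ++ β).take (j + 1)).sum ≤ i) → j < α.length - 1 := by
      intro j hj
      by_contra hge
      push_neg at hge
      have hlen : α.length ≤ j + 1 := by omega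
      rw [List.take_append, List.take_of_length_le hlen,
        List.sum_append] at hj
      omega
    have h2 : (List.range (α.length + β.length)).countP
        (fun j => decide (((α ++ β).take (j + 1)).sum ≤ i)) ≤
        (List.range (α.length + β.length)).countP
        (fun j => decide (j < α.length - 1)) := by
      apply List.countP_mono_left
      intro x _ hx
      simp only [decide_eq_true_eq] at hx ⊢
      exact hkey x hx
    have h3 : (List.range (α.length + β.length)).countP
        (fun j => decide (j < α.length - 1)) ≤ α.length - 1 := by
      rw [List.countP_eq_length_filter]
      have hsub : (List.range (α.length + β.length)).filter
          (fun j => decide (j < α.length - 1)) ⊆ List.range (α.length - 1) := by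
        intro x hx
        rw [List.mem_filter] at hx
        rw [List.mem_range]
        simpa using hx.2
      have hnd : ((List.range (α.length + β.length)).filter
          (fun j => decide (j < α.length - 1))).Nodup :=
        List.nodup_range.filter _
      have := (List.subperm_of_subset hnd hsub).length_le
      simpa using this
    omega

lemma colourOfIdx_eq_iff (α β : List ℕ) (x y : ℕ) :
    colourOfIdx α β x = colourOfIdx α β y ↔
      blockOf (α ++ β) x = blockOf (α ++ β) y := by
  unfold colourOfIdx
  split_ifs with h1 h2 h2 <;> simp [cCol, dCol] <;> omega

lemma colourOfIdx_dCol_iff (α β : List ℕ) (i : ℕ) :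
    (∃ k, colourOfIdx α β i = dCol k) ↔ α.sum ≤ i := by
  unfold colourOfIdx
  split_ifs with h
  · simp only [cCol, dCol]
    constructor
    · rintro ⟨k, hk⟩
      exact absurd hk (by simp)
    · intro hle
      exact absurd ((blockOf_lt_iff α β i).mp h) (by omega)
  · constructor
    · intro _
      by_contra hc
      push_neg at hc
      exact h ((blockOf_lt_iff α β i).mpr hc)
    · intro _
      exact ⟨_, rfl⟩

lemma cell_fst_ne {lam : List ℕ} {c c' : Cell lam} (h2 : (c.2 : ℕ) = (c'.2 : ℕ))
    (hne : c ≠ c') : c.1 ≠ c'.1 := by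
  rcases c with ⟨r, j⟩
  rcases c' with ⟨r', j'⟩
  intro h
  dsimp at h h2
  subst h
  exact hne (by rw [Fin.ext h2])

/-- **Characterisation of `𝒞` (Lemma on `𝒞`).** For `d ∈ Sym n` the following are
equivalent: (a) `d ∈ 𝒞`; (b) `stab_{C_{t0}}(T_d) ⊆ d Sym_β^{+|α|} d⁻¹`; (c) any repeated
colour in a column of `T_d` is one of the colours `d_k`. -/
theorem mem_CSet_iff (n : ℕ) (lam : List ℕ) (hl : IsPartition n lam)
    (α β : List ℕ) (hab : IsBicomp n α β) (t0 : Tab n lam) (d : Sym n) :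
    (d ∈ CSet t0 α β ↔
      {σ | σ ∈ colStab t0 ∧ actT t0 σ (TOf t0 α β d) = TOf t0 α β d} ⊆
        {x | ∃ ξ ∈ symB n α β, x = d * ξ * d⁻¹}) ∧
    (d ∈ CSet t0 α β ↔
      ∀ c c' : Cell lam, (c.2 : ℕ) = (c'.2 : ℕ) → c.1 ≠ c'.1 →
        TOf t0 α β d c = TOf t0 α β d c' → ∃ k, TOf t0 α β d c = dCol k) := by
  classical
  have hT : ∀ c : Cell lam, TOf t0 α β d c = colourOfIdx α β (d⁻¹ (t0 c)) := by
    intro c; simp [TOf, actT, canonT]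
  have key : ∀ σ : Sym n,
      actT t0 σ (TOf t0 α β d) = TOf t0 α β d ↔
        d⁻¹ * σ * d ∈ youngSubgroup n (α ++ β) := by
    intro σ
    constructor
    · intro h
      rw [mem_young_iff]
      intro i
      have h2 := congrFun h (t0.symm (σ (d i)))
      simp only [actT] at h2
      rw [Equiv.apply_symm_apply] at h2
      rw [hT, hT] at h2
      rw [Equiv.apply_symm_apply, Equiv.apply_symm_apply] at h2
      rw [perm_inv_apply_self, perm_inv_apply_self] at h2
      rw [colourOfIdx_eq_iff] at h2
      simp only [Equiv.Perm.mul_apply]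
      exact h2.symm
    · intro h
      funext c
      simp only [actT]
      rw [hT, hT, Equiv.apply_symm_apply]
      rw [colourOfIdx_eq_iff]
      have h2 := (mem_young_iff.mp h) (d⁻¹ (σ⁻¹ (t0 c)))
      simp only [Equiv.Perm.mul_apply, perm_apply_inv_self] at h2
      exact h2.symm
  have hBconj : ∀ σ : Sym n, (∃ ξ ∈ symB n α β, σ = d * ξ * d⁻¹) ↔
      d⁻¹ * σ * d ∈ symB n α β := by
    intro σ
    constructor
    · rintro ⟨ξ, hξ, rfl⟩
      have : d⁻¹ * (d * ξ * d⁻¹) * d = ξ := by group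
      rwa [this]
    · intro h
      exact ⟨d⁻¹ * σ * d, h, by group⟩
  constructor
  · constructor
    · intro hd σ hσ
      obtain ⟨h1, h2⟩ := hσ
      exact (hBconj σ).mpr (hd σ h1 ((key σ).mp h2))
    · intro h σ hσ hy
      exact (hBconj σ).mp (h ⟨hσ, (key σ).mpr hy⟩)
  · constructor
    · -- (a) → (c)
      intro hd c c' hcol hrow heq
      set a := t0 c with ha
      set b := t0 c' with hb
      have hab' : a ≠ b := by
        intro e
        exact hrow (congrArg Sigma.fst (t0.injective e))
      have hσcol : Equiv.swap a b ∈ colStab t0 := by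
        intro x
        rcases eq_or_ne x a with rfl | hxa
        · rw [Equiv.swap_apply_left, ha, hb, Equiv.symm_apply_apply,
            Equiv.symm_apply_apply]
          exact hcol.symm
        · rcases eq_or_ne x b with rfl | hxb
          · rw [Equiv.swap_apply_right, ha, hb, Equiv.symm_apply_apply,
              Equiv.symm_apply_apply]
            exact hcol
          · rw [Equiv.swap_apply_of_ne_of_ne hxa hxb]
      have hblock : blockOf (α ++ β) (d⁻¹ a) = blockOf (α ++ β) (d⁻¹ b) := by
        rw [← colourOfIdx_eq_iff α β]
        rw [← hT c, ← hT c']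
        exact heq
      have hy : d⁻¹ * Equiv.swap a b * d ∈ youngSubgroup n (α ++ β) := by
        rw [mem_young_iff]
        intro i
        simp only [Equiv.Perm.mul_apply]
        rcases eq_or_ne (d i) a with hda | hda
        · rw [hda, Equiv.swap_apply_left]
          rw [← hblock, ← hda, perm_inv_apply_self]
        · rcases eq_or_ne (d i) b with hdb | hdb
          · rw [hdb, Equiv.swap_apply_right]
            rw [hblock, ← hdb, perm_inv_apply_self]
          · rw [Equiv.swap_apply_of_ne_of_ne hda hdb, perm_inv_apply_self]
      have hmem := hd (Equiv.swap a b) hσcol hy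
      rw [hT c, colourOfIdx_dCol_iff]
      by_contra hc
      push_neg at hc
      have hfix := hmem.2 (d⁻¹ a) hc
      simp only [Equiv.Perm.mul_apply, perm_apply_inv_self,
        Equiv.swap_apply_left] at hfix
      exact hab' (by
        have := congrArg d hfix
        rw [perm_apply_inv_self, perm_apply_inv_self] at this
        exact this.symm)
    · -- (c) → (a)
      intro h σ hσ hy
      refine ⟨hy, ?_⟩
      intro i hi
      by_contra hne
      set ρ := d⁻¹ * σ * d with hρ
      have hσd : σ (d i) = d (ρ i) := by
        simp [hρ, Equiv.Perm.mul_apply]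
      set c := t0.symm (d i) with hc
      set c' := t0.symm (d (ρ i)) with hc'
      have hcol : (c'.2 : ℕ) = (c.2 : ℕ) := by
        have := hσ (d i)
        rw [hσd] at this
        exact this
      have hne' : c ≠ c' := by
        intro e
        exact hne (d.injective (t0.symm.injective e)).symm
      have hfst : c.1 ≠ c'.1 := cell_fst_ne hcol.symm hne'
      have hTc : TOf t0 α β d c = colourOfIdx α β i := by
        rw [hT c, hc, Equiv.apply_symm_apply, perm_inv_apply_self]
      have hTc' : TOf t0 α β d c' = colourOfIdx α β (ρ i) := by
        rw [hT c', hc', Equiv.apply_symm_apply, perm_inv_apply_self]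
      have heq : TOf t0 α β d c = TOf t0 α β d c' := by
        rw [hTc, hTc', colourOfIdx_eq_iff]
        exact ((mem_young_iff.mp hy) i).symm
      obtain ⟨k, hk⟩ := h c c' hcol.symm hfst heq
      rw [hTc] at hk
      have := (colourOfIdx_dCol_iff α β i).mp ⟨k, hk⟩
      omega

end SignedYoung
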